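/- The product of two normal pattern subgroups is the pattern subgroup of the union of the posets: if O and P are subposets of R with UT_O, UT_P normal in UT_R, then the set product UT_O · UT_P equals UT_{O∪P}, where i ≤_{O∪P} j iff i ≤_O j or i ≤_P j; in particular O∪P is again a partial order in this situation. -/

import Mathlib

open scoped Pointwise

/-- The pattern group `UT_r` as a set of invertible matrices. -/
def UTset {A F : Type*} [Fintype A] [DecidableEq A] [Field F]
    (r : A → A → Prop) : Set (Matrix A A F)ˣ :=
  {u | (∀ i, (u : Matrix A A F) i i = 1) ∧
       ∀ i j, ¬ r i j → (u : Matrix A A F) i j = 0}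

section Aux

open Matrix

variable {A F : Type*} [Fintype A] [DecidableEq A] [Field F]

lemma elem_mul_elem (c d : F) (i j : A) (h : j ≠ i) :
    single i j c * (single i j d : Matrix A A F) = 0 :=
  Matrix.single_mul_single_of_ne c i j _ h d

/-- The elementary unipotent matrix `1 + c E_{ij}` as a unit. -/
def elemU (c : F) (i j : A) (h : i ≠ j) : (Matrix A A F)ˣ where
  val := 1 + single i j c
  inv := 1 + single i j (-c)
  val_inv := by
    rw [add_mul, mul_add, mul_add, elem_mul_elem _ _ _ _ (Ne.symm h)]
    simp [← Matrix.single_add, add_assoc]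
  inv_val := by
    rw [add_mul, mul_add, mul_add, elem_mul_elem _ _ _ _ (Ne.symm h)]
    simp [← Matrix.single_add, add_assoc]

lemma elemU_inv (c : F) (i j : A) (h : i ≠ j) :
    (elemU c i j h)⁻¹ = elemU (-c) i j h := by
  apply Units.ext; rfl

lemma elemU_mem {q : A → A → Prop} (hq : ∀ a, q a a) {c : F} {i j : A} (h : i ≠ j)
    (hij : q i j) : elemU c i j h ∈ UTset (F := F) q := by
  refine ⟨fun a => ?_, fun a b hab => ?_⟩
  · have : ¬(i = a ∧ j = a) := fun ⟨e1, e2⟩ => h (e1.trans e2.symm)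
    simp [elemU, Matrix.one_apply, Matrix.single_apply_of_ne (h := this)]
  · have hab' : a ≠ b := fun e => hab (e ▸ hq a)
    have : ¬(i = a ∧ j = b) := fun ⟨e1, e2⟩ => hab (e1 ▸ e2 ▸ hij)
    simp [elemU, Matrix.one_apply_ne hab', Matrix.single_apply_of_ne (h := this)]

lemma mul_mem_UTset {q₁ q₂ q : A → A → Prop}
    (hanti : ∀ a k, q₁ a k → q₂ k a → a = k)
    (hcomp : ∀ a k b, q₁ a k → q₂ k b → q a b)
    {u v : (Matrix A A F)ˣ} (hu : u ∈ UTset (F := F) q₁) (hv : v ∈ UTset (F := F) q₂) :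
    u * v ∈ UTset (F := F) q := by
  obtain ⟨hu1, hu2⟩ := hu; obtain ⟨hv1, hv2⟩ := hv
  refine ⟨fun a => ?_, fun a b hab => ?_⟩
  · rw [Units.val_mul, Matrix.mul_apply]
    rw [Finset.sum_eq_single a]
    · rw [hu1 a, hv1 a, one_mul]
    · intro k _ hk
      by_cases h1 : (u : Matrix A A F) a k = 0
      · rw [h1, zero_mul]
      by_cases h2 : (v : Matrix A A F) k a = 0
      · rw [h2, mul_zero]
      have hq1 : q₁ a k := by_contra fun hn => h1 (hu2 a k hn)
      have hq2 : q₂ k a := by_contra fun hn => h2 (hv2 k a hn)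
      exact absurd (hanti a k hq1 hq2).symm hk
    · intro ha; exact absurd (Finset.mem_univ a) ha
  · rw [Units.val_mul, Matrix.mul_apply]
    refine Finset.sum_eq_zero fun k _ => ?_
    by_cases h1 : (u : Matrix A A F) a k = 0
    · rw [h1, zero_mul]
    by_cases h2 : (v : Matrix A A F) k b = 0
    · rw [h2, mul_zero]
    have hq1 : q₁ a k := by_contra fun hn => h1 (hu2 a k hn)
    have hq2 : q₂ k b := by_contra fun hn => h2 (hv2 k b hn)
    exact absurd (hcomp a k b hq1 hq2) hab

lemma conj_left_entry (i' i j : A) (h1 : i' ≠ i) (h2 : i ≠ j) (h3 : i' ≠ j) :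
    ((1 + single i' i (1:F)) * (1 + single i j (1:F)) *
      (1 + single i' i (-1:F))) i' j = 1 := by
  have e1 : single i' i (1:F) * single i j (1:F) = single i' j 1 := by
    rw [Matrix.single_mul_single_same]; ring_nf
  have e2 : ∀ c d : F, single i j c * (single i' i d : Matrix A A F) = 0 :=
    fun c d => Matrix.single_mul_single_of_ne c i j _ h3.symm d
  have e3 : ∀ c d : F, single i' i c * (single i' i d : Matrix A A F) = 0 :=
    fun c d => Matrix.single_mul_single_of_ne c i' i _ (Ne.symm h1) d
  have e4 : ∀ c d : F, single i' j c * (single i' i d : Matrix A A F) = 0 :=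
    fun c d => Matrix.single_mul_single_of_ne c i' j _ h3.symm d
  simp only [add_mul, mul_add, one_mul, mul_one, e1, e2, e3, e4, add_zero, zero_add]
  simp [Matrix.one_apply_ne h3, Ne.symm h1, h2]

lemma conj_right_entry (i j j' : A) (h2 : i ≠ j) (h4 : j ≠ j') (h5 : i ≠ j') :
    ((1 + single j j' (1:F)) * (1 + single i j (1:F)) *
      (1 + single j j' (-1:F))) i j' = -1 := by
  have e1 : ∀ c d : F, single j j' c * (single i j d : Matrix A A F) = 0 :=
    fun c d => Matrix.single_mul_single_of_ne c j j' _ (Ne.symm h5) d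
  have e2 : single i j (1:F) * (single j j' (-1:F) : Matrix A A F)
      = single i j' (-1) := by
    rw [Matrix.single_mul_single_same]; ring_nf
  have e3 : ∀ c d : F, single j j' c * (single j j' d : Matrix A A F) = 0 :=
    fun c d => Matrix.single_mul_single_of_ne c j j' _ (Ne.symm h4) d
  simp only [add_mul, mul_add, one_mul, mul_one, e1, e2, e3, add_zero, zero_add]
  simp [Matrix.one_apply_ne h5, Ne.symm h2, h4]

/-- Normality implies the co-ideal property of the pattern. -/
lemma coideal {r q : A → A → Prop} (hr : IsPartialOrder A r)
    (hq : ∀ a, q a a) (hqs : ∀ i j, q i j → r i j)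
    (hn : ∀ g ∈ UTset (F := F) r, ∀ u ∈ UTset (F := F) q,
        g * u * g⁻¹ ∈ UTset (F := F) q)
    {i j i' j' : A} (hij : q i j) (hne : i ≠ j) (hi : r i' i) (hj : r j j') : q i' j' := by
  have h3 : i' ≠ j := fun e => hne (hr.antisymm i j (hqs i j hij) (e ▸ hi))
  have step1 : q i' j := by
    by_cases hii : i' = i
    · subst hii; exact hij
    · have hgm := elemU_mem (F := F) (c := (1:F)) hr.refl hii hi
      have hum := elemU_mem (F := F) (c := (1:F)) hq hne hij
      have hconj := hn _ hgm _ hum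
      by_contra hnq
      have h0 := hconj.2 i' j hnq
      have h1 : ((elemU (1:F) i' i hii * elemU 1 i j hne * (elemU 1 i' i hii)⁻¹ :
          (Matrix A A F)ˣ) : Matrix A A F) i' j = 1 := by
        rw [elemU_inv, Units.val_mul, Units.val_mul]
        exact conj_left_entry i' i j hii hne h3
      rw [h0] at h1
      exact one_ne_zero h1.symm
  by_cases hjj : j' = j
  · subst hjj; exact step1
  · have h4 : j ≠ j' := fun e => hjj e.symm
    have h5 : i' ≠ j' := fun e => h3 (hr.antisymm i' j (hqs i' j step1) (e.symm ▸ hj))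
    have hgm := elemU_mem (F := F) (c := (1:F)) hr.refl h4 hj
    have hum := elemU_mem (F := F) (c := (1:F)) hq h3 step1
    have hconj := hn _ hgm _ hum
    by_contra hnq
    have h0 := hconj.2 i' j' hnq
    have h1 : ((elemU (1:F) j j' h4 * elemU 1 i' j h3 * (elemU 1 j j' h4)⁻¹ :
        (Matrix A A F)ˣ) : Matrix A A F) i' j' = -1 := by
      rw [elemU_inv, Units.val_mul, Units.val_mul]
      exact conj_right_entry i' j j' h3 h4 h5
    rw [h0] at h1
    exact one_ne_zero (neg_eq_zero.mp h1.symm)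

end Aux

/-- For normal pattern subgroups, `UT_O · UT_P = UT_{O ∪ P}`, and the union
relation is again a partial order. -/
theorem pattern_subgroup_mul
    {A F : Type*} [Fintype A] [DecidableEq A] [Field F] [Fintype F]
    (r o p : A → A → Prop)
    (hr : IsPartialOrder A r) (ho : IsPartialOrder A o) (hp : IsPartialOrder A p)
    (hos : ∀ i j, o i j → r i j) (hps : ∀ i j, p i j → r i j)
    (hno : ∀ g ∈ UTset (F := F) r, ∀ u ∈ UTset (F := F) o,
        g * u * g⁻¹ ∈ UTset (F := F) o)
    (hnp : ∀ g ∈ UTset (F := F) r, ∀ u ∈ UTset (F := F) p,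
        g * u * g⁻¹ ∈ UTset (F := F) p) :
    IsPartialOrder A (fun i j => o i j ∨ p i j) ∧
    UTset (F := F) o * UTset (F := F) p
      = UTset (F := F) (fun i j => o i j ∨ p i j) := by
  classical
  have co := fun {i j i' j' : A} => coideal (F := F) hr ho.refl hos hno (i := i) (j := j)
    (i' := i') (j' := j')
  have cp := fun {i j i' j' : A} => coideal (F := F) hr hp.refl hps hnp (i := i) (j := j)
    (i' := i') (j' := j')
  have hrefl : ∀ a, o a a ∨ p a a := fun a => Or.inl (ho.refl a)
  have htrans : ∀ a b c, (o a b ∨ p a b) → (o b c ∨ p b c) → (o a c ∨ p a c) := by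
    rintro a b c (hab | hab) (hbc | hbc)
    · exact Or.inl (ho.trans a b c hab hbc)
    · by_cases e : a = b
      · subst e; exact Or.inr hbc
      · exact Or.inl (co hab e (hr.refl a) (hps b c hbc))
    · by_cases e : a = b
      · subst e; exact Or.inl hbc
      · exact Or.inr (cp hab e (hr.refl a) (hos b c hbc))
    · exact Or.inr (hp.trans a b c hab hbc)
  have hanti : ∀ a b, (o a b ∨ p a b) → (o b a ∨ p b a) → a = b := fun a b h1 h2 =>
    hr.antisymm a b (h1.elim (hos a b) (hps a b)) (h2.elim (hos b a) (hps b a))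
  have hupo : IsPartialOrder A (fun i j => o i j ∨ p i j) :=
    { refl := hrefl, trans := htrans, antisymm := hanti }
  refine ⟨hupo, ?_⟩
  have one_mem_p : (1 : (Matrix A A F)ˣ) ∈ UTset (F := F) p := by
    refine ⟨fun i => ?_, fun i j hij => ?_⟩
    · simp
    · have : i ≠ j := fun e => hij (e ▸ hp.refl i)
      simp [Matrix.one_apply_ne this]
  -- base case helper
  have hbase : ∀ w : (Matrix A A F)ˣ,
      w ∈ UTset (F := F) (fun i j => o i j ∨ p i j) →
      {x : A × A | ¬ o x.1 x.2 ∧ (w : Matrix A A F) x.1 x.2 ≠ 0} = ∅ →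
      w ∈ UTset (F := F) o * UTset (F := F) p := by
    intro w hw hB
    have hwo : w ∈ UTset (F := F) o := by
      refine ⟨hw.1, fun i j hij => ?_⟩
      by_contra h0
      exact (Set.eq_empty_iff_forall_notMem.mp hB (i, j)) ⟨hij, h0⟩
    exact mul_one w ▸ Set.mul_mem_mul hwo one_mem_p
  have key : ∀ n : ℕ, ∀ w : (Matrix A A F)ˣ,
      w ∈ UTset (F := F) (fun i j => o i j ∨ p i j) →
      {x : A × A | ¬ o x.1 x.2 ∧ (w : Matrix A A F) x.1 x.2 ≠ 0}.ncard ≤ n →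
      w ∈ UTset (F := F) o * UTset (F := F) p := by
    intro n
    induction n with
    | zero =>
      intro w hw hcard
      exact hbase w hw ((Set.ncard_eq_zero (Set.toFinite _)).mp (Nat.le_zero.mp hcard))
    | succ n IH =>
      intro w hw hcard
      by_cases hB : {x : A × A | ¬ o x.1 x.2 ∧ (w : Matrix A A F) x.1 x.2 ≠ 0} = ∅
      · exact hbase w hw hB
      · obtain ⟨⟨i0, j0⟩, hx0⟩ := Set.nonempty_iff_ne_empty.mpr hB
        letI : PartialOrder A :=
          { le := r, le_refl := hr.refl, le_trans := hr.trans, le_antisymm := hr.antisymm }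
        obtain ⟨j, hjC, hjmax⟩ := Set.Finite.exists_maximalFor id
          (Prod.snd '' {x : A × A | ¬ o x.1 x.2 ∧ (w : Matrix A A F) x.1 x.2 ≠ 0})
          (Set.toFinite _) ⟨j0, ⟨(i0, j0), hx0, rfl⟩⟩
        obtain ⟨⟨i, j₁⟩, hbad, hj₁⟩ := hjC
        change j₁ = j at hj₁
        rw [hj₁] at hbad
        obtain ⟨hnoij, hwij⟩ := hbad
        have hpij : p i j := by
          have hun : o i j ∨ p i j := by_contra fun hn => hwij (hw.2 i j hn)
          exact hun.resolve_left hnoij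
        have hij : i ≠ j := fun e => hnoij (e ▸ ho.refl i)
        set c : F := (w : Matrix A A F) i j with hc
        set g : (Matrix A A F)ˣ := elemU (-c) i j hij with hg
        have hg_p : g ∈ UTset (F := F) p := elemU_mem hp.refl hij hpij
        have hg_r : g ∈ UTset (F := F) r := elemU_mem hr.refl hij (hps i j hpij)
        have hg_u : g ∈ UTset (F := F) (fun i j => o i j ∨ p i j) :=
          elemU_mem hrefl hij (Or.inr hpij)
        have hginv_p : g⁻¹ ∈ UTset (F := F) p := by
          rw [hg, elemU_inv]; exact elemU_mem hp.refl hij hpij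
        have hginv_r : g⁻¹ ∈ UTset (F := F) r := by
          rw [hg, elemU_inv]; exact elemU_mem hr.refl hij (hps i j hpij)
        have hw' : g * w ∈ UTset (F := F) (fun i j => o i j ∨ p i j) :=
          mul_mem_UTset hanti htrans hg_u hw
        have hentry : ∀ a b, ((g * w : (Matrix A A F)ˣ) : Matrix A A F) a b
            = (w : Matrix A A F) a b
              + (if a = i then (-c) * (w : Matrix A A F) j b else 0) := by
          intro a b
          rw [Units.val_mul]
          show ((1 + Matrix.single i j (-c)) * (w : Matrix A A F)) a b = _
          rw [add_mul, one_mul, Matrix.add_apply]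
          congr 1
          by_cases ha : a = i
          · subst ha
            rw [if_pos rfl, Matrix.single_mul_apply_same]
          · rw [if_neg ha, Matrix.single_mul_apply_of_ne _ _ _ _ _ ha]
        have hsub : {x : A × A | ¬ o x.1 x.2 ∧
              ((g * w : (Matrix A A F)ˣ) : Matrix A A F) x.1 x.2 ≠ 0}
            ⊆ {x : A × A | ¬ o x.1 x.2 ∧ (w : Matrix A A F) x.1 x.2 ≠ 0} \ {(i, j)} := by
          rintro ⟨a, b⟩ ⟨hnab, hne0⟩
          rw [hentry] at hne0
          by_cases ha : a = i
          · rw [ha] at hnab hne0 ⊢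
            rw [if_pos rfl] at hne0
            have hbj : b ≠ j := by
              intro e; rw [e] at hne0
              apply hne0
              rw [hw.1 j, mul_one, ← hc]
              ring
            have hwi : (w : Matrix A A F) i b ≠ 0 := by
              intro h0
              rw [h0, zero_add] at hne0
              have hwjb : (w : Matrix A A F) j b ≠ 0 := fun h => hne0 (by rw [h, mul_zero])
              have hjb : j ≠ b := fun e => hbj e.symm
              by_cases hojb : o j b
              · exact hnab (co hojb hjb (hps i j hpij) (hr.refl b))
              · have hbC : b ∈ Prod.snd ''
                    {x : A × A | ¬ o x.1 x.2 ∧ (w : Matrix A A F) x.1 x.2 ≠ 0} :=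
                  ⟨(j, b), ⟨hojb, hwjb⟩, rfl⟩
                exact hjb ((fun h => hr.antisymm _ _ h (hjmax hbC h)) (hps j b (by
                  have hun : o j b ∨ p j b := by_contra fun hn => hwjb (hw.2 j b hn)
                  exact hun.resolve_left hojb)))
            exact ⟨⟨hnab, hwi⟩, by simp [Prod.ext_iff, hbj]⟩
          · rw [if_neg ha, add_zero] at hne0
            exact ⟨⟨hnab, hne0⟩, by simp [Prod.ext_iff, ha]⟩
        have hmem_bad : ((i, j) : A × A) ∈
            {x : A × A | ¬ o x.1 x.2 ∧ (w : Matrix A A F) x.1 x.2 ≠ 0} := ⟨hnoij, hwij⟩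
        have hcard' : {x : A × A | ¬ o x.1 x.2 ∧
            ((g * w : (Matrix A A F)ˣ) : Matrix A A F) x.1 x.2 ≠ 0}.ncard ≤ n := by
          have h1 := Set.ncard_le_ncard hsub (Set.toFinite _)
          rw [Set.ncard_diff_singleton_of_mem hmem_bad] at h1
          omega
        have hgw := IH (g * w) hw' hcard'
        rw [Set.mem_mul] at hgw
        obtain ⟨u, hu, v, hv, huv⟩ := hgw
        have h1 : g⁻¹ * u * g ∈ UTset (F := F) o := by
          have := hno g⁻¹ hginv_r u hu
          rwa [inv_inv] at this
        have h2 : g⁻¹ * v ∈ UTset (F := F) p :=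
          mul_mem_UTset (fun a k ha hk => hp.antisymm a k ha hk)
            (fun a k b ha hk => hp.trans a k b ha hk) hginv_p hv
        have heq : w = (g⁻¹ * u * g) * (g⁻¹ * v) := by
          have h3 : g⁻¹ * (u * v) = w := by rw [huv, inv_mul_cancel_left]
          rw [← h3]; group
        rw [heq]
        exact Set.mul_mem_mul h1 h2
  ext w
  constructor
  · rintro hx
    rw [Set.mem_mul] at hx
    obtain ⟨u, hu, v, hv, rfl⟩ := hx
    exact mul_mem_UTset (fun a k h1 h2 => hr.antisymm a k (hos a k h1) (hps k a h2))
      (fun a k b h1 h2 => htrans a k b (Or.inl h1) (Or.inr h2)) hu hv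
  · intro hw
    exact key _ w hw le_rfl
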